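/- Let q be a natural number with q > 2, and let G be a C₄-free simple graph on q²+q vertices with at least (1/2)·q·(q+1)² − q edges. Then the maximum degree of a vertex in G is at most q+2. -/

import Mathlib

set_option maxHeartbeats 1600000

open Finset SimpleGraph


/-- A simple graph is `C₄`-free iff no two distinct vertices have two or more
common neighbors. -/
def C4Free {V : Type*} (G : SimpleGraph V) : Prop :=
  ∀ u v : V, u ≠ v → {w : V | G.Adj u w ∧ G.Adj v w}.Subsingleton

private lemma two_mul_choose_two (k : ℕ) : 2 * k.choose 2 = k * (k - 1) := by
  induction k with
  | zero => rfl
  | succ n ih =>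
    rw [Nat.choose_succ_succ, Nat.mul_add, ih, Nat.choose_one_right]
    cases n with
    | zero => simp
    | succ m => simp only [Nat.succ_sub_one]; ring

private lemma cast_mul_pred (k : ℕ) : ((k * (k - 1) : ℕ) : ℤ) = (k : ℤ) * ((k : ℤ) - 1) := by
  cases k with
  | zero => simp
  | succ m => push_cast [Nat.succ_sub_one]; ring

private lemma F1aux (q m : ℤ) (hq : 3 ≤ q) (hm : 0 ≤ m) (hma : m ≤ q^2 - 4) :
    0 ≤ (q^2+q-1-m)*(q^3-q^2-4*q+3) + m*((q^2+q-1-m)-m) := by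
  have hr : (0:ℤ) ≤ q - 3 := by linarith
  have ha : (0:ℤ) ≤ q^2 - 4 - m := by linarith
  nlinarith [mul_nonneg ha hm, mul_nonneg (mul_nonneg hr hr) ha, mul_nonneg hr ha,
    mul_nonneg (mul_nonneg hr hr) hr, mul_nonneg (mul_nonneg (mul_nonneg hr hr) hr) ha]

private lemma F2aux (q m : ℤ) (hq : 3 ≤ q) (hm : 0 ≤ m) (hma : m ≤ q^2 - 4) :
    0 < (q^2+q-1-m)*((q^3-q^2-4*q+3)+m)*(q^3-q^2-4*q+3) - m^2*((q^2+q-1-m)-m)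
      - (q^2+q-1-m)*m^2*(m-1) := by
  have hr : (0:ℤ) ≤ q - 3 := by linarith
  have ha : (0:ℤ) ≤ q^2 - 4 - m := by linarith
  have h2 : (0:ℤ) ≤ (q-3)*(q-3) := mul_nonneg hr hr
  have ha2 : (0:ℤ) ≤ (q^2-4-m)*(q^2-4-m) := mul_nonneg ha ha
  nlinarith [hm, mul_nonneg hm ha, mul_nonneg hm ha2,
    mul_nonneg hm hr, mul_nonneg (mul_nonneg hm hr) ha,
    mul_nonneg (mul_nonneg hm hr) ha2,
    mul_nonneg hm h2, mul_nonneg (mul_nonneg hm h2) ha,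
    mul_nonneg (mul_nonneg hm h2) ha2,
    mul_nonneg (mul_nonneg hm h2) hr,
    mul_nonneg (mul_nonneg (mul_nonneg hm h2) hr) ha,
    mul_nonneg (mul_nonneg hm hm) ha2,
    mul_nonneg ha ha2, mul_nonneg ha2 ha2, hr,
    mul_nonneg hr ha, mul_nonneg hr ha2,
    mul_nonneg h2 ha, mul_nonneg h2 ha2,
    mul_nonneg (mul_nonneg h2 ha) ha2]

private lemma keyArith (q d m C B : ℤ) (hq : 3 ≤ q) (hd : q + 3 ≤ d) (hm : 0 ≤ m)
    (hdm : d + m = q^2 + q - 1) (hC0 : 0 ≤ C) (hCm : C ≤ m) (hB0 : 0 ≤ B)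
    (hI : m*C^2 + d*B^2 ≤ d*m*(C+B) + d*m^2*(m-1))
    (hII : q^3 + 2*q^2 - q ≤ 3*d + m + C + B) : False := by
  have hdval : d = q^2 + q - 1 - m := by linarith
  subst hdval
  have hma : m ≤ q^2 - 4 := by linarith
  have hr : (0:ℤ) ≤ q - 3 := by linarith
  have hP0 : 0 ≤ q^3 - q^2 - 4*q + 3 := by
    nlinarith [mul_nonneg (mul_nonneg hr hr) hr, mul_nonneg hr hr]
  have h2 : (q^3 - q^2 - 4*q + 3) + 2*m - C ≤ B := by linarith
  have e1 : 0 ≤ (q^3 - q^2 - 4*q + 3) + m - C := by linarith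
  have h3 : ((q^3 - q^2 - 4*q + 3)+2*m-C)*((q^3 - q^2 - 4*q + 3)+m-C) ≤ B*(B-m) := by
    have e2 : (q^3 - q^2 - 4*q + 3) + m - C ≤ B - m := by linarith
    exact mul_le_mul h2 e2 e1 (by linarith)
  have hd0 : (0:ℤ) ≤ q^2 + q - 1 - m := by linarith
  have h4 : (q^2+q-1-m)*(((q^3 - q^2 - 4*q + 3)+2*m-C)*((q^3 - q^2 - 4*q + 3)+m-C))
      ≤ m*C*((q^2+q-1-m)-C) + (q^2+q-1-m)*m^2*(m-1) := by
    have := mul_le_mul_of_nonneg_left h3 hd0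
    nlinarith [hI]
  have hn1 : (0:ℤ) ≤ q^2 + q - 1 := by nlinarith [mul_nonneg hr hr]
  have t1 : (0:ℤ) ≤ (q^2+q-1) * (m-C)^2 := mul_nonneg hn1 (sq_nonneg _)
  have t2 : (0:ℤ) ≤ ((q^2+q-1-m)*(q^3-q^2-4*q+3) + m*((q^2+q-1-m)-m)) * (m - C) :=
    mul_nonneg (F1aux q m hq hm hma) (by linarith)
  have t3 := F2aux q m hq hm hma
  nlinarith [h4, t1, t2, t3]

/-- If `q > 2` and `G` is a `C₄`-free graph on `q² + q` vertices with at least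
`E₀ = q(q+1)²/2 - q` edges, then the maximum degree of `G` is at most `q + 2`. -/
theorem maxDegree_le_of_C4Free (q : ℕ) (hq : 2 < q)
    (G : SimpleGraph (Fin (q ^ 2 + q))) [DecidableRel G.Adj] (hG : C4Free G)
    (he : q * (q + 1) ^ 2 / 2 - q ≤ G.edgeFinset.card) :
    ∀ v, G.degree v ≤ q + 2 := by
  intro v
  by_contra hdeg
  push_neg at hdeg
  classical
  set N : Finset (Fin (q ^ 2 + q)) := G.neighborFinset v with hN
  have hvN : v ∉ N := by simp [hN]
  set W : Finset (Fin (q ^ 2 + q)) := Finset.univ \ insert v N with hW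
  set x : Fin (q ^ 2 + q) → ℕ := fun u => (G.neighborFinset u ∩ W).card with hx
  have hcom : ∀ a b : Fin (q ^ 2 + q), a ≠ b →
      (G.neighborFinset a ∩ G.neighborFinset b).card ≤ 1 := by
    intro a b hab
    rw [Finset.card_le_one]
    intro y hy z hz
    simp only [Finset.mem_inter, SimpleGraph.mem_neighborFinset] at hy hz
    exact hG a b hab ⟨hy.1, hy.2⟩ ⟨hz.1, hz.2⟩
  have hmemW : ∀ u, u ∈ W ↔ (u ≠ v ∧ u ∉ N) := by
    intro u; simp only [hW, Finset.mem_sdiff, Finset.mem_univ, Finset.mem_insert, true_and]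
    tauto
  -- (A)
  have hA : ∀ u ∈ N, G.degree u ≤ 2 + x u := by
    intro u hu
    have huv : u ≠ v := by rintro rfl; exact hvN hu
    have hsub : G.neighborFinset u ⊆
        insert v ((G.neighborFinset u ∩ N) ∪ (G.neighborFinset u ∩ W)) := by
      intro y hy
      rcases eq_or_ne y v with rfl | hyv
      · exact Finset.mem_insert_self _ _
      · refine Finset.mem_insert_of_mem ?_
        by_cases hyN : y ∈ N
        · exact Finset.mem_union_left _ (Finset.mem_inter.mpr ⟨hy, hyN⟩)
        · exact Finset.mem_union_right _ (Finset.mem_inter.mpr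
            ⟨hy, (hmemW y).mpr ⟨hyv, hyN⟩⟩)
    have h1 : (G.neighborFinset u ∩ N).card ≤ 1 := by rw [hN]; exact hcom u v huv
    have h2 := Finset.card_le_card hsub
    have h3 := Finset.card_insert_le v ((G.neighborFinset u ∩ N) ∪ (G.neighborFinset u ∩ W))
    have h4 := Finset.card_union_le (G.neighborFinset u ∩ N) (G.neighborFinset u ∩ W)
    have h5 : G.degree u = (G.neighborFinset u).card := rfl
    have h6 : x u = (G.neighborFinset u ∩ W).card := rfl
    omega
  -- (B)
  have hB : ∀ w ∈ W, G.degree w ≤ 1 + x w := by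
    intro w hw
    obtain ⟨hwv, hwN⟩ := (hmemW w).mp hw
    have hsub : G.neighborFinset w ⊆
        (G.neighborFinset w ∩ N) ∪ (G.neighborFinset w ∩ W) := by
      intro y hy
      have hyv : y ≠ v := by
        rintro rfl
        apply hwN
        rw [hN, SimpleGraph.mem_neighborFinset]
        exact ((SimpleGraph.mem_neighborFinset _ _ _).mp hy).symm
      by_cases hyN : y ∈ N
      · exact Finset.mem_union_left _ (Finset.mem_inter.mpr ⟨hy, hyN⟩)
      · exact Finset.mem_union_right _ (Finset.mem_inter.mpr
          ⟨hy, (hmemW y).mpr ⟨hyv, hyN⟩⟩)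
    have h1 : (G.neighborFinset w ∩ N).card ≤ 1 := by rw [hN]; exact hcom w v hwv
    have h2 := Finset.card_le_card hsub
    have h4 := Finset.card_union_le (G.neighborFinset w ∩ N) (G.neighborFinset w ∩ W)
    have h5 : G.degree w = (G.neighborFinset w).card := rfl
    have h6 : x w = (G.neighborFinset w ∩ W).card := rfl
    omega
  -- (C)
  have hswap : ∀ (s t : Finset (Fin (q ^ 2 + q))),
      ∑ u ∈ s, (G.neighborFinset u ∩ t).card = ∑ w ∈ t, (G.neighborFinset w ∩ s).card := by
    have key : ∀ (u : Fin (q ^ 2 + q)) (t : Finset (Fin (q ^ 2 + q))),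
        (G.neighborFinset u ∩ t).card = ∑ w ∈ t, if G.Adj u w then 1 else 0 := by
      intro u t
      rw [← Finset.card_filter]
      congr 1
      ext w
      simp [SimpleGraph.mem_neighborFinset, and_comm]
    intro s t
    simp_rw [key]
    rw [Finset.sum_comm]
    refine Finset.sum_congr rfl fun w _ => Finset.sum_congr rfl fun u _ => by
      simp only [G.adj_comm]
  have hC : ∑ u ∈ N, x u ≤ W.card := by
    have h0 : ∑ u ∈ N, x u = ∑ w ∈ W, (G.neighborFinset w ∩ N).card := hswap N W
    rw [h0]
    calc ∑ w ∈ W, (G.neighborFinset w ∩ N).card ≤ ∑ _w ∈ W, 1 := by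
          refine Finset.sum_le_sum fun w hw => ?_
          have hwv := ((hmemW w).mp hw).1
          rw [hN]; exact hcom w v hwv
      _ = W.card := by simp
  -- (F)
  have hchoose : ∑ u, (x u).choose 2 ≤ W.card.choose 2 := by
    have hcard : ∑ u, (x u).choose 2
        = (Finset.univ.sigma fun u => (G.neighborFinset u ∩ W).powersetCard 2).card := by
      rw [Finset.card_sigma]
      exact Finset.sum_congr rfl fun u _ => by rw [Finset.card_powersetCard]
    rw [hcard, ← Finset.card_powersetCard 2 W]
    refine Finset.card_le_card_of_injOn (fun p => p.2) ?_ ?_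
    · rintro ⟨u, e⟩ hp
      simp only [Finset.mem_coe, Finset.mem_sigma, Finset.mem_powersetCard] at hp ⊢
      exact ⟨hp.2.1.trans Finset.inter_subset_right, hp.2.2⟩
    · rintro ⟨u, e⟩ hp ⟨u', e'⟩ hp' h
      simp only [Finset.mem_coe, Finset.mem_sigma, Finset.mem_powersetCard] at hp hp'
      have he' : e = e' := h
      subst he'
      obtain ⟨a, ha, b, hb, hab⟩ := Finset.one_lt_card.mp
        (show (1:ℕ) < e.card by rw [hp.2.2]; omega)
      have hau : G.Adj u a := by
        have := Finset.mem_inter.mp (hp.2.1 ha)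
        exact (SimpleGraph.mem_neighborFinset _ _ _).mp this.1
      have hbu : G.Adj u b := by
        have := Finset.mem_inter.mp (hp.2.1 hb)
        exact (SimpleGraph.mem_neighborFinset _ _ _).mp this.1
      have hau' : G.Adj u' a := by
        have := Finset.mem_inter.mp (hp'.2.1 ha)
        exact (SimpleGraph.mem_neighborFinset _ _ _).mp this.1
      have hbu' : G.Adj u' b := by
        have := Finset.mem_inter.mp (hp'.2.1 hb)
        exact (SimpleGraph.mem_neighborFinset _ _ _).mp this.1
      have huu : u = u' := hG a b hab ⟨hau.symm, hbu.symm⟩ ⟨hau'.symm, hbu'.symm⟩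
      subst huu
      rfl
  -- sum split
  have hsplit : ∀ f : Fin (q ^ 2 + q) → ℕ,
      ∑ u, f u = f v + ∑ u ∈ N, f u + ∑ w ∈ W, f w := by
    intro f
    have h1 := Finset.sum_sdiff (f := f) (Finset.subset_univ (insert v N))
    rw [Finset.sum_insert hvN] at h1
    rw [hW]
    omega
  -- cardinalities
  have hWcard : W.card + (G.degree v + 1) = q ^ 2 + q := by
    have h1 : (insert v N).card = G.degree v + 1 := by
      rw [Finset.card_insert_of_notMem hvN]
      rfl
    have h2 : W.card = Fintype.card (Fin (q ^ 2 + q)) - (insert v N).card := by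
      rw [hW, Finset.card_sdiff_of_subset (Finset.subset_univ _), Finset.card_univ]
    have h3 := G.degree_lt_card_verts v
    rw [Fintype.card_fin] at h2 h3
    omega
  -- edge count
  have hedge : q * (q + 1) ^ 2 ≤ 2 * G.edgeFinset.card + 2 * q := by
    have hev : Even (q * (q + 1) ^ 2) := by
      rw [show q * (q + 1) ^ 2 = q * (q + 1) * (q + 1) by ring]
      exact (Nat.even_mul_succ_self q).mul_right _
    obtain ⟨k, hk⟩ := hev
    rw [hk] at he ⊢
    omega
  have hdegsum := G.sum_degrees_eq_twice_card_edges
  -- degree sum bound (II in ℕ)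
  have hdegbd : q * (q + 1) ^ 2 ≤ G.degree v + (2 * N.card + ∑ u ∈ N, x u)
      + (W.card + ∑ w ∈ W, x w) + 2 * q := by
    have h1 : ∑ u ∈ N, G.degree u ≤ 2 * N.card + ∑ u ∈ N, x u := by
      calc ∑ u ∈ N, G.degree u ≤ ∑ u ∈ N, (2 + x u) := Finset.sum_le_sum hA
        _ = 2 * N.card + ∑ u ∈ N, x u := by
            rw [Finset.sum_add_distrib, Finset.sum_const, smul_eq_mul, mul_comm]
    have h2 : ∑ w ∈ W, G.degree w ≤ W.card + ∑ w ∈ W, x w := by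
      calc ∑ w ∈ W, G.degree w ≤ ∑ w ∈ W, (1 + x w) := Finset.sum_le_sum hB
        _ = W.card + ∑ w ∈ W, x w := by
            rw [Finset.sum_add_distrib, Finset.sum_const, smul_eq_mul, mul_one]
    have h3 := hsplit (fun u => G.degree u)
    simp only at h3
    linarith [hedge, hdegsum.symm.le, hdegsum.le]
  -- pair bound in ℕ
  have hpairN : ∑ u ∈ N, x u * (x u - 1) + ∑ w ∈ W, x w * (x w - 1)
      ≤ W.card * (W.card - 1) := by
    have h1 : ∑ u, x u * (x u - 1) = 2 * ∑ u, (x u).choose 2 := by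
      rw [Finset.mul_sum]
      exact Finset.sum_congr rfl fun u _ => (two_mul_choose_two (x u)).symm
    have h2 : ∑ u, x u * (x u - 1) ≤ W.card * (W.card - 1) := by
      rw [h1, ← two_mul_choose_two]
      omega
    have h3 := hsplit (fun u => x u * (x u - 1))
    simp only at h3
    omega
  -- pass to ℤ
  have hq3 : (3:ℤ) ≤ (q:ℤ) := by exact_mod_cast hq
  have hd3 : (q:ℤ) + 3 ≤ (G.degree v : ℤ) := by exact_mod_cast hdeg
  have hm0 : (0:ℤ) ≤ (W.card : ℤ) := Int.natCast_nonneg _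
  have hNd : (N.card : ℤ) = (G.degree v : ℤ) := rfl
  have hdm : (G.degree v : ℤ) + (W.card : ℤ) = (q:ℤ)^2 + (q:ℤ) - 1 := by
    have h := hWcard
    have h' := congrArg (fun t : ℕ => (t : ℤ)) h
    push_cast at h'
    linarith
  have hC0 : (0:ℤ) ≤ ∑ u ∈ N, (x u : ℤ) := Finset.sum_nonneg fun u _ => Int.natCast_nonneg _
  have hB0 : (0:ℤ) ≤ ∑ w ∈ W, (x w : ℤ) := Finset.sum_nonneg fun w _ => Int.natCast_nonneg _
  have hCm : ∑ u ∈ N, (x u : ℤ) ≤ (W.card : ℤ) := by exact_mod_cast hC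
  -- Chebyshev
  have hSN : (∑ u ∈ N, (x u : ℤ))^2 ≤ (G.degree v : ℤ) * ∑ u ∈ N, (x u : ℤ)^2 := by
    rw [← hNd]
    exact sq_sum_le_card_mul_sum_sq
  have hSW : (∑ w ∈ W, (x w : ℤ))^2 ≤ (W.card : ℤ) * ∑ w ∈ W, (x w : ℤ)^2 :=
    sq_sum_le_card_mul_sum_sq
  -- pair bound in ℤ
  have hcast : ∀ (s : Finset (Fin (q ^ 2 + q))),
      ∑ u ∈ s, (x u : ℤ)^2 = ((∑ u ∈ s, x u * (x u - 1) : ℕ) : ℤ) + ∑ u ∈ s, (x u : ℤ) := by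
    intro s
    rw [Nat.cast_sum, ← Finset.sum_add_distrib]
    refine Finset.sum_congr rfl fun u _ => ?_
    rw [cast_mul_pred]
    ring
  have hpairZ : ∑ u ∈ N, (x u : ℤ)^2 + ∑ w ∈ W, (x w : ℤ)^2
      ≤ (W.card : ℤ) * ((W.card : ℤ) - 1) + ∑ u ∈ N, (x u : ℤ) + ∑ w ∈ W, (x w : ℤ) := by
    have h2 : ((∑ u ∈ N, x u * (x u - 1) : ℕ) : ℤ) + ((∑ w ∈ W, x w * (x w - 1) : ℕ) : ℤ)
        ≤ (W.card : ℤ) * ((W.card : ℤ) - 1) := by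
      rw [← cast_mul_pred]
      exact_mod_cast hpairN
    rw [hcast N, hcast W]
    linarith
  -- (I)
  have hI : (W.card : ℤ) * (∑ u ∈ N, (x u : ℤ))^2 + (G.degree v : ℤ) * (∑ w ∈ W, (x w : ℤ))^2
      ≤ (G.degree v : ℤ) * (W.card : ℤ) * (∑ u ∈ N, (x u : ℤ) + ∑ w ∈ W, (x w : ℤ))
        + (G.degree v : ℤ) * (W.card : ℤ)^2 * ((W.card : ℤ) - 1) := by
    have hdz : (0:ℤ) ≤ (G.degree v : ℤ) := Int.natCast_nonneg _
    have t1 := mul_le_mul_of_nonneg_left hSN hm0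
    have t2 := mul_le_mul_of_nonneg_left hSW hdz
    have t3 := mul_le_mul_of_nonneg_left hpairZ (mul_nonneg hdz hm0)
    nlinarith [t1, t2, t3]
  -- (II)
  have hII : (q:ℤ)^3 + 2*(q:ℤ)^2 - (q:ℤ)
      ≤ 3*(G.degree v : ℤ) + (W.card : ℤ) + ∑ u ∈ N, (x u : ℤ) + ∑ w ∈ W, (x w : ℤ) := by
    have h2 := (Nat.cast_le (α := ℤ)).mpr hdegbd
    push_cast at h2
    rw [← hNd]
    push_cast
    nlinarith [h2]
  exact keyArith (q:ℤ) (G.degree v : ℤ) (W.card : ℤ) (∑ u ∈ N, (x u : ℤ))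
    (∑ w ∈ W, (x w : ℤ)) hq3 hd3 hm0 (by push_cast at hdm ⊢; linarith)
    hC0 hCm hB0 hI (by push_cast; linarith [hII])
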